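/- Let F be a biset-family and J a set of directed edges on V such that for some core Ĉ of F, J covers every member of F(Ĉ) and J covers no core of F other than Ĉ. Then the set of cores of the residual family F^J equals the set of cores of F with Ĉ removed, so ν(F^J) = ν(F) − 1. -/

import Mathlib

open Set

variable {V : Type*}

/-- A pair `(S, S⁺)` is a biset when `S ⊆ S⁺`. -/
def IsBiset (X : Set V × Set V) : Prop := X.1 ⊆ X.2

/-- An edge `(u,v)` covers biset `(S,S⁺)` if `u ∈ S` and `v ∈ V ∖ S⁺`. -/
def Covers (e : V × V) (X : Set V × Set V) : Prop := e.1 ∈ X.1 ∧ e.2 ∈ X.2ᶜ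

/-- Componentwise intersection of bisets. -/
def bCap (X Y : Set V × Set V) : Set V × Set V := (X.1 ∩ Y.1, X.2 ∩ Y.2)

/-- Componentwise union of bisets. -/
def bCup (X Y : Set V × Set V) : Set V × Set V := (X.1 ∪ Y.1, X.2 ∪ Y.2)

/-- Bisets intersect if their inner parts intersect. -/
def Intersects (X Y : Set V × Set V) : Prop := (X.1 ∩ Y.1).Nonempty

/-- Bisets cross if inner parts intersect and outer parts do not cover `V`. -/
def Cross (X Y : Set V × Set V) : Prop := (X.1 ∩ Y.1).Nonempty ∧ X.2 ∪ Y.2 ≠ Set.univ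

/-- Co-biset of `(S,S⁺)` is `(V∖S⁺, V∖S)`. -/
def coBiset (X : Set V × Set V) : Set V × Set V := (X.2ᶜ, X.1ᶜ)

/-- Crossing biset-family. -/
def CrossingFamily (F : Set (Set V × Set V)) : Prop :=
  ∀ X ∈ F, ∀ Y ∈ F, Cross X Y → bCap X Y ∈ F ∧ bCup X Y ∈ F

/-- Intersecting biset-family. -/
def IntersectingFamily (F : Set (Set V × Set V)) : Prop :=
  ∀ X ∈ F, ∀ Y ∈ F, Intersects X Y → bCap X Y ∈ F ∧ bCup X Y ∈ F

/-- Intersection-closed biset-family. -/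
def IntersectionClosed (F : Set (Set V × Set V)) : Prop :=
  ∀ X ∈ F, ∀ Y ∈ F, Intersects X Y → bCap X Y ∈ F

/-- A biset is covered by some edge of `J`. -/
def CoveredBy (J : Set (V × V)) (X : Set V × Set V) : Prop := ∃ e ∈ J, Covers e X

/-- `J` covers every member of the family `F`. -/
def CoversFamily (J : Set (V × V)) (F : Set (Set V × Set V)) : Prop := ∀ X ∈ F, CoveredBy J X

/-- Residual family: members of `F` not covered by any edge of `J`. -/
def Residual (F : Set (Set V × Set V)) (J : Set (V × V)) : Set (Set V × Set V) :=
  {X ∈ F | ¬ CoveredBy J X}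

/-- Biset containment, componentwise. -/
def bSubset (X Y : Set V × Set V) : Prop := X.1 ⊆ Y.1 ∧ X.2 ⊆ Y.2

/-- A core of `F` : an inclusion-minimal member. -/
def IsCore (F : Set (Set V × Set V)) (C : Set V × Set V) : Prop :=
  C ∈ F ∧ ∀ S ∈ F, bSubset S C → S = C

/-- `F(Ĉ)` : members of `F` containing `Ĉ` and no other core of `F`. -/
def FamAt (F : Set (Set V × Set V)) (C : Set V × Set V) : Set (Set V × Set V) :=
  {S ∈ F | bSubset C S ∧ ∀ C', IsCore F C' → bSubset C' S → C' = C}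

/-- `F[U]` : members of `F` contained in some member of `U`. -/
def FamUnder (F U : Set (Set V × Set V)) : Set (Set V × Set V) :=
  {S ∈ F | ∃ W ∈ U, bSubset S W}

/-- `k`-regular biset-family. -/
def kRegular (k : ℕ) (F : Set (Set V × Set V)) : Prop :=
  ∀ X ∈ F, ∀ Y ∈ F, Intersects X Y → k + 1 ≤ (X.1 ∪ Y.1)ᶜ.ncard →
    bCap X Y ∈ F ∧ bCup X Y ∈ F

/-- `q`-semi-intersecting biset-family. -/
def qSemiIntersecting (q : ℕ) (S : Set (Set V × Set V)) : Prop :=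
  IntersectionClosed S ∧ (∀ X ∈ S, X.1.ncard ≤ q) ∧
  ∀ X ∈ S, ∀ Y ∈ S, Intersects X Y → (X.1 ∪ Y.1).ncard ≤ q → bCup X Y ∈ S


lemma bSubset_trans {X Y Z : Set V × Set V} (h1 : bSubset X Y) (h2 : bSubset Y Z) :
    bSubset X Z := ⟨h1.1.trans h2.1, h1.2.trans h2.2⟩

lemma bSubset_antisymm {X Y : Set V × Set V} (h1 : bSubset X Y) (h2 : bSubset Y X) :
    X = Y := Prod.ext (subset_antisymm h1.1 h2.1) (subset_antisymm h1.2 h2.2)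

lemma bSubset_refl (X : Set V × Set V) : bSubset X X := ⟨subset_rfl, subset_rfl⟩

lemma exists_core [Fintype V] (F : Set (Set V × Set V)) {S : Set V × Set V} (hS : S ∈ F) :
    ∃ D, IsCore F D ∧ bSubset D S := by
  obtain ⟨a, ⟨haF, haS⟩, hmin⟩ : ∃ a ∈ {T ∈ F | bSubset T S}, ∀ a' ∈ {T ∈ F | bSubset T S},
      id a' ≤ id a → id a = id a' := by
    obtain ⟨a, ha, hmin⟩ := Set.Finite.exists_minimalFor (id : (Set V × Set V) → (Set V × Set V))
      {T ∈ F | bSubset T S} (Set.toFinite _) ⟨S, hS, bSubset_refl S⟩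
    exact ⟨a, ha, fun b hb hba => le_antisymm (hmin hb hba) hba⟩
  refine ⟨a, ⟨haF, fun b hbF hba => ?_⟩, haS⟩
  exact (hmin b ⟨hbF, bSubset_trans hba haS⟩ ⟨hba.1, hba.2⟩).symm

theorem stmt_15 [Fintype V] (F : Set (Set V × Set V)) (J : Set (V × V))
    (C : Set V × Set V) (hC : IsCore F C)
    (hcov : CoversFamily J (FamAt F C))
    (hother : ∀ C', IsCore F C' → C' ≠ C → ¬ CoveredBy J C') :
    {C' | IsCore (Residual F J) C'} = {C' | IsCore F C'} \ {C} ∧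
    {C' | IsCore (Residual F J) C'}.ncard = {C' | IsCore F C'}.ncard - 1 := by
  have key : {C' | IsCore (Residual F J) C'} = {C' | IsCore F C'} \ {C} := by
    ext C'
    simp only [Set.mem_setOf_eq, Set.mem_diff, Set.mem_singleton_iff]
    constructor
    · rintro ⟨⟨hC'F, hC'nc⟩, hmin⟩
      -- find a core D of F, D ⊆ C', D ≠ C
      have hD : ∃ D, IsCore F D ∧ bSubset D C' ∧ D ≠ C := by
        obtain ⟨D, hDcore, hDsub⟩ := exists_core F hC'F
        by_cases hDC : D = C
        · -- then C ⊆ C'; since C' is not covered, C' ∉ FamAt F C, so some other core fits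
          subst hDC
          by_contra h
          push_neg at h
          have hfam : C' ∈ FamAt F D := by
            refine ⟨hC'F, hDsub, fun C'' hc hsub => ?_⟩
            by_contra hne
            exact hne (h C'' hc hsub)
          exact hC'nc (hcov C' hfam)
        · exact ⟨D, hDcore, hDsub, hDC⟩
      obtain ⟨D, hDcore, hDsub, hDC⟩ := hD
      have hDres : D ∈ Residual F J := ⟨hDcore.1, hother D hDcore hDC⟩
      have hDeq : D = C' := hmin D hDres hDsub
      subst hDeq
      exact ⟨hDcore, hDC⟩
    · rintro ⟨hC'core, hC'ne⟩
      refine ⟨⟨hC'core.1, hother C' hC'core hC'ne⟩, fun S hS hsub => ?_⟩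
      exact hC'core.2 S hS.1 hsub
  refine ⟨key, ?_⟩
  rw [key]
  exact Set.ncard_diff_singleton_of_mem hC
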